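/- Let λ > 0, let σ ∈ ℝ^d be a unit vector, and let f : ℝ^d → ℝ be bounded and measurable. Then for all v, v⋆ ∈ ℝ^d, (g_λ⋆f)(v') + (g_λ⋆f)(v⋆') = ∫_{ℝ^d}∫_{ℝ^d} (f(u') + f(u⋆')) g_λ(u−v) g_λ(u⋆−v⋆) du du⋆, where (u', u⋆') denotes the post-collisional velocities of (u, u⋆) with the same σ. Consequently Δ(g_λ⋆f)(v, v⋆, σ) = ∫_{ℝ^d}∫_{ℝ^d} Δf(u, u⋆, σ) g_λ(u−v) g_λ(u⋆−v⋆) du du⋆. -/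

import Mathlib

open scoped RealInnerProductSpace
open MeasureTheory

/-- The Gaussian density `g_λ(x) = (2πλ)^{−d/2} exp(−|x|²/(2λ))` on `ℝ^d`. -/
noncomputable def gaussDensity (d : ℕ) (lam : ℝ) (x : EuclideanSpace ℝ (Fin d)) : ℝ :=
  (2 * Real.pi * lam) ^ (-(d : ℝ) / 2) * Real.exp (-‖x‖ ^ 2 / (2 * lam))

/-- The convolution `(g_λ ⋆ f)(v) = ∫ g_λ(v − u) f(u) du`. -/
noncomputable def gaussConv (d : ℕ) (lam : ℝ) (f : EuclideanSpace ℝ (Fin d) → ℝ)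
    (v : EuclideanSpace ℝ (Fin d)) : ℝ :=
  ∫ u, gaussDensity d lam (v - u) * f u

section Aux

variable {d : ℕ}

/-- The collision map `(u, u⋆) ↦ (u', u⋆')` as a linear map on the product space. -/
noncomputable def collMap (d : ℕ) (σ : EuclideanSpace ℝ (Fin d)) :
    (EuclideanSpace ℝ (Fin d) × EuclideanSpace ℝ (Fin d)) →ₗ[ℝ]
    (EuclideanSpace ℝ (Fin d) × EuclideanSpace ℝ (Fin d)) where
  toFun p := (p.1 - ⟪p.1 - p.2, σ⟫ • σ, p.2 + ⟪p.1 - p.2, σ⟫ • σ)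
  map_add' p q := by
    simp only [Prod.fst_add, Prod.snd_add, Prod.mk_add_mk, Prod.mk.injEq]
    rw [show p.1 + q.1 - (p.2 + q.2) = (p.1 - p.2) + (q.1 - q.2) by abel, inner_add_left]
    constructor <;> module
  map_smul' c p := by
    simp only [Prod.smul_fst, Prod.smul_snd, RingHom.id_apply, Prod.smul_mk, Prod.mk.injEq]
    rw [show c • p.1 - c • p.2 = c • (p.1 - p.2) by module, real_inner_smul_left]
    constructor <;> module

theorem collMap_fst (σ : EuclideanSpace ℝ (Fin d)) (p) :
    (collMap d σ p).1 = p.1 - ⟪p.1 - p.2, σ⟫ • σ := rfl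

theorem collMap_snd (σ : EuclideanSpace ℝ (Fin d)) (p) :
    (collMap d σ p).2 = p.2 + ⟪p.1 - p.2, σ⟫ • σ := rfl

theorem collMap_invol (σ : EuclideanSpace ℝ (Fin d)) (hσ : ‖σ‖ = 1) (p) :
    collMap d σ (collMap d σ p) = p := by
  have hs : ⟪σ, σ⟫ = 1 := by
    rw [real_inner_self_eq_norm_sq, hσ]; norm_num
  obtain ⟨u, us⟩ := p
  simp only [collMap, LinearMap.coe_mk, AddHom.coe_mk]
  have h1 : ⟪u - ⟪u - us, σ⟫ • σ - (us + ⟪u - us, σ⟫ • σ), σ⟫ = -⟪u - us, σ⟫ := by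
    rw [show u - ⟪u - us, σ⟫ • σ - (us + ⟪u - us, σ⟫ • σ)
        = (u - us) - (2 * ⟪u - us, σ⟫) • σ by module]
    rw [inner_sub_left, real_inner_smul_left, hs]
    ring
  rw [h1]
  ext1 <;> simp

theorem collMap_norm (σ : EuclideanSpace ℝ (Fin d)) (hσ : ‖σ‖ = 1) (p :
    EuclideanSpace ℝ (Fin d) × EuclideanSpace ℝ (Fin d)) :
    ‖(collMap d σ p).1‖ ^ 2 + ‖(collMap d σ p).2‖ ^ 2 = ‖p.1‖ ^ 2 + ‖p.2‖ ^ 2 := by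
  have hs : ⟪σ, σ⟫ = 1 := by
    rw [real_inner_self_eq_norm_sq, hσ]; norm_num
  obtain ⟨u, us⟩ := p
  simp only [collMap, LinearMap.coe_mk, AddHom.coe_mk]
  rw [← real_inner_self_eq_norm_sq, ← real_inner_self_eq_norm_sq,
    ← real_inner_self_eq_norm_sq, ← real_inner_self_eq_norm_sq]
  simp only [inner_sub_left, inner_sub_right, inner_add_left, inner_add_right,
    real_inner_smul_left, real_inner_smul_right, hs]
  rw [real_inner_comm us σ, real_inner_comm u σ]
  ring

/-- The collision map as a homeomorphism (it is a continuous involution). -/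
noncomputable def collHomeo (d : ℕ) (σ : EuclideanSpace ℝ (Fin d)) (hσ : ‖σ‖ = 1) :
    (EuclideanSpace ℝ (Fin d) × EuclideanSpace ℝ (Fin d)) ≃ₜ
    (EuclideanSpace ℝ (Fin d) × EuclideanSpace ℝ (Fin d)) where
  toFun := collMap d σ
  invFun := collMap d σ
  left_inv := collMap_invol σ hσ
  right_inv := collMap_invol σ hσ
  continuous_toFun := LinearMap.continuous_of_finiteDimensional _
  continuous_invFun := LinearMap.continuous_of_finiteDimensional _

theorem collMap_measurePreserving (σ : EuclideanSpace ℝ (Fin d)) (hσ : ‖σ‖ = 1) :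
    MeasurePreserving (collMap d σ) volume volume := by
  have hdet2 : LinearMap.det (collMap d σ) * LinearMap.det (collMap d σ) = 1 := by
    rw [← LinearMap.det_comp]
    rw [show (collMap d σ) ∘ₗ (collMap d σ) = LinearMap.id from
      LinearMap.ext fun p => collMap_invol σ hσ p]
    exact LinearMap.det_id
  have hdet : |LinearMap.det (collMap d σ)| = 1 := by
    rcases mul_self_eq_one_iff.1 hdet2 with h | h <;> rw [h] <;> norm_num
  have hdet0 : LinearMap.det (collMap d σ) ≠ 0 := by
    intro h; rw [h] at hdet2; norm_num at hdet2
  have : (volume : Measure (EuclideanSpace ℝ (Fin d) ×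
      EuclideanSpace ℝ (Fin d))).IsAddHaarMeasure := by
    rw [Measure.volume_eq_prod]
    exact Measure.prod.instIsAddHaarMeasure _ _
  constructor
  · exact (LinearMap.continuous_of_finiteDimensional (collMap d σ)).measurable
  · rw [Measure.map_linearMap_addHaar_eq_smul_addHaar volume hdet0, abs_inv, hdet]
    norm_num

theorem gaussDensity_neg (lam : ℝ) (x : EuclideanSpace ℝ (Fin d)) :
    gaussDensity d lam (-x) = gaussDensity d lam x := by
  simp [gaussDensity]

theorem integrable_gaussDensity {lam : ℝ} (hlam : 0 < lam) :
    Integrable (gaussDensity d lam) := by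
  have hb : (0:ℝ) < (2*lam)⁻¹ := by positivity
  have h : Integrable (fun x : EuclideanSpace ℝ (Fin d) => Real.exp (-(2*lam)⁻¹ * ‖x‖^2)) := by
    have h1 := GaussianFourier.integrable_cexp_neg_mul_sq_norm_add
      (V := EuclideanSpace ℝ (Fin d)) (b := ((2*lam)⁻¹ : ℂ)) (by simpa using hb) 0 0
    refine h1.re.congr (Filter.Eventually.of_forall fun x => ?_)
    have : (-((2 * (lam:ℝ))⁻¹:ℂ) * (‖x‖:ℂ)^2 + 0 * ((inner ℝ (0:EuclideanSpace ℝ (Fin d)) x : ℝ):ℂ))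
        = ((-(2*lam)⁻¹ * ‖x‖^2 : ℝ) : ℂ) := by push_cast; ring
    show (Complex.exp _).re = _
    rw [this, Complex.exp_ofReal_re]
  refine (h.const_mul ((2 * Real.pi * lam) ^ (-(d : ℝ) / 2))).congr
    (Filter.Eventually.of_forall fun x => ?_)
  unfold gaussDensity
  beta_reduce
  rw [show -(2*lam)⁻¹ * ‖x‖^2 = -‖x‖^2/(2*lam) by ring]

theorem integral_gaussDensity {lam : ℝ} (hlam : 0 < lam) :
    ∫ x, gaussDensity d lam x = 1 := by
  have hb : (0:ℝ) < (2*lam)⁻¹ := by positivity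
  have h := GaussianFourier.integral_rexp_neg_mul_sq_norm (V := EuclideanSpace ℝ (Fin d)) hb
  unfold gaussDensity
  simp_rw [neg_div, ← inv_mul_eq_div, ← neg_mul]
  rw [integral_const_mul, h, finrank_euclideanSpace_fin]
  rw [show Real.pi / (2*lam)⁻¹ = 2*Real.pi*lam by field_simp,
    ← Real.rpow_add (by positivity), show -2⁻¹*(d:ℝ) + d/2 = 0 by ring, Real.rpow_zero]

theorem gaussConv_eq (d : ℕ) (lam : ℝ) (f : EuclideanSpace ℝ (Fin d) → ℝ)
    (w : EuclideanSpace ℝ (Fin d)) :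
    gaussConv d lam f w = ∫ u, f u * gaussDensity d lam (u - w) := by
  unfold gaussConv
  congr 1; ext u
  rw [mul_comm, show w - u = -(u - w) by abel, gaussDensity_neg]

/-- The Gaussian pair density is invariant under the collision map. -/
theorem gaussDensity_mul_coll (lam : ℝ) (σ : EuclideanSpace ℝ (Fin d)) (hσ : ‖σ‖ = 1)
    (q : EuclideanSpace ℝ (Fin d) × EuclideanSpace ℝ (Fin d)) :
    gaussDensity d lam (collMap d σ q).1 * gaussDensity d lam (collMap d σ q).2
      = gaussDensity d lam q.1 * gaussDensity d lam q.2 := by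
  unfold gaussDensity
  rw [mul_mul_mul_comm, ← Real.exp_add, mul_mul_mul_comm, ← Real.exp_add]
  have hnorm := collMap_norm σ hσ q
  congr 2
  rw [← add_div, ← add_div]
  congr 1
  linarith

theorem gaussDensity_pair_coll (lam : ℝ) (σ : EuclideanSpace ℝ (Fin d)) (hσ : ‖σ‖ = 1)
    (p : EuclideanSpace ℝ (Fin d) × EuclideanSpace ℝ (Fin d))
    (w ws : EuclideanSpace ℝ (Fin d)) :
    gaussDensity d lam ((collMap d σ p).1 - (collMap d σ (w, ws)).1) *
      gaussDensity d lam ((collMap d σ p).2 - (collMap d σ (w, ws)).2)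
      = gaussDensity d lam (p.1 - w) * gaussDensity d lam (p.2 - ws) := by
  have h1 : ((collMap d σ p).1 - (collMap d σ (w, ws)).1,
      (collMap d σ p).2 - (collMap d σ (w, ws)).2) = collMap d σ (p - (w, ws)) := by
    rw [map_sub]; rfl
  rw [show (collMap d σ p).1 - (collMap d σ (w, ws)).1 = (collMap d σ (p - (w, ws))).1 from
      congrArg Prod.fst h1,
    show (collMap d σ p).2 - (collMap d σ (w, ws)).2 = (collMap d σ (p - (w, ws))).2 from
      congrArg Prod.snd h1]
  exact gaussDensity_mul_coll lam σ hσ (p - (w, ws))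

/-- The basic double integral evaluation : for bounded measurable `f`,
`∫∫ (f u + f u⋆) g(u−w) g(u⋆−w⋆) = (g⋆f)(w) + (g⋆f)(w⋆)`. -/
theorem double_int (d : ℕ) (lam : ℝ) (hlam : 0 < lam) (f : EuclideanSpace ℝ (Fin d) → ℝ)
    (hf_meas : Measurable f) (C : ℝ) (hC : ∀ x, |f x| ≤ C)
    (w ws : EuclideanSpace ℝ (Fin d)) :
    ∫ u, ∫ us, (f u + f us) * (gaussDensity d lam (u - w) * gaussDensity d lam (us - ws))
      = gaussConv d lam f w + gaussConv d lam f ws := by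
  have hgi : Integrable (gaussDensity d lam) := integrable_gaussDensity hlam
  have hg1 : ∀ c, Integrable (fun u => gaussDensity d lam (u - c)) := fun c =>
    hgi.comp_sub_right c
  have hg2 : ∀ c : EuclideanSpace ℝ (Fin d), ∫ u, gaussDensity d lam (u - c) = 1 := fun c => by
    rw [integral_sub_right_eq_self]; exact integral_gaussDensity hlam
  have hfg : ∀ c, Integrable (fun u => f u * gaussDensity d lam (u - c)) := fun c =>
    (hg1 c).bdd_mul hf_meas.aestronglyMeasurable (c := C) (Filter.Eventually.of_forall fun x => by simpa using hC x)
  have hinner : ∀ u, (∫ us, (f u + f us) *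
        (gaussDensity d lam (u - w) * gaussDensity d lam (us - ws)))
      = f u * gaussDensity d lam (u - w)
        + (∫ us, f us * gaussDensity d lam (us - ws)) * gaussDensity d lam (u - w) := by
    intro u
    have hpt : ∀ us, (f u + f us) * (gaussDensity d lam (u - w) * gaussDensity d lam (us - ws))
        = (f u * gaussDensity d lam (u - w)) * gaussDensity d lam (us - ws)
          + (f us * gaussDensity d lam (us - ws)) * gaussDensity d lam (u - w) := fun us => by
      ring
    simp_rw [hpt]
    rw [integral_add ((hg1 ws).const_mul _) ((hfg ws).mul_const _),
      integral_const_mul, integral_mul_const, hg2 ws, mul_one]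
  simp_rw [hinner]
  rw [integral_add (hfg w) ((hg1 w).const_mul _), integral_const_mul, hg2 w, mul_one,
    ← gaussConv_eq, ← gaussConv_eq]

end Aux

/-- for bounded measurable `f`, the Gaussian mollification commutes with the
collision map: `(g_λ⋆f)(v') + (g_λ⋆f)(v⋆') = ∫∫ (f(u') + f(u⋆')) g_λ(u−v) g_λ(u⋆−v⋆) du du⋆`,
and consequently `Δ(g_λ⋆f)(v,v⋆,σ) = ∫∫ Δf(u,u⋆,σ) g_λ(u−v) g_λ(u⋆−v⋆) du du⋆`. -/
theorem gaussConv_collision_invariance (d : ℕ) (lam : ℝ) (hlam : 0 < lam)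
    (σ : EuclideanSpace ℝ (Fin d)) (hσ : ‖σ‖ = 1)
    (f : EuclideanSpace ℝ (Fin d) → ℝ) (hf_meas : Measurable f)
    (hf_bdd : ∃ C, ∀ x, |f x| ≤ C)
    (v vs : EuclideanSpace ℝ (Fin d)) :
    (gaussConv d lam f (v - ⟪v - vs, σ⟫ • σ) + gaussConv d lam f (vs + ⟪v - vs, σ⟫ • σ)
      = ∫ u, ∫ us, (f (u - ⟪u - us, σ⟫ • σ) + f (us + ⟪u - us, σ⟫ • σ)) *
          (gaussDensity d lam (u - v) * gaussDensity d lam (us - vs))) ∧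
    (gaussConv d lam f (v - ⟪v - vs, σ⟫ • σ) + gaussConv d lam f (vs + ⟪v - vs, σ⟫ • σ)
        - gaussConv d lam f v - gaussConv d lam f vs
      = ∫ u, ∫ us, (f (u - ⟪u - us, σ⟫ • σ) + f (us + ⟪u - us, σ⟫ • σ) - f u - f us) *
          (gaussDensity d lam (u - v) * gaussDensity d lam (us - vs))) := by
  obtain ⟨C, hC⟩ := hf_bdd
  have hgi : Integrable (gaussDensity d lam) := integrable_gaussDensity hlam
  have hg1 : ∀ c, Integrable (fun u => gaussDensity d lam (u - c)) := fun c =>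
    hgi.comp_sub_right c
  have hGprod : Integrable (fun p : EuclideanSpace ℝ (Fin d) × EuclideanSpace ℝ (Fin d) =>
      gaussDensity d lam (p.1 - v) * gaussDensity d lam (p.2 - vs)) (volume.prod volume) :=
    (hg1 v).mul_prod (hg1 vs)
  have hTm : Measurable (collMap d σ) :=
    (LinearMap.continuous_of_finiteDimensional (collMap d σ)).measurable
  have hemb : MeasurableEmbedding (collMap d σ) := (collHomeo d σ hσ).measurableEmbedding
  have hMP := collMap_measurePreserving σ hσ
  -- measurability of the bounded factors
  have hm1 : Measurable fun p : EuclideanSpace ℝ (Fin d) × EuclideanSpace ℝ (Fin d) =>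
      f (p.1 - ⟪p.1 - p.2, σ⟫ • σ) + f (p.2 + ⟪p.1 - p.2, σ⟫ • σ) := by
    have := (hf_meas.comp (measurable_fst.comp hTm)).add
      (hf_meas.comp (measurable_snd.comp hTm))
    exact this
  have hm2 : Measurable fun p : EuclideanSpace ℝ (Fin d) × EuclideanSpace ℝ (Fin d) =>
      f p.1 + f p.2 :=
    (hf_meas.comp measurable_fst).add (hf_meas.comp measurable_snd)
  have hm3 : Measurable fun p : EuclideanSpace ℝ (Fin d) × EuclideanSpace ℝ (Fin d) =>
      f (p.1 - ⟪p.1 - p.2, σ⟫ • σ) + f (p.2 + ⟪p.1 - p.2, σ⟫ • σ) - f p.1 - f p.2 :=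
    (hm1.sub (hf_meas.comp measurable_fst)).sub (hf_meas.comp measurable_snd)
  -- product integrability of the three integrands
  have hbm : ∀ (h : EuclideanSpace ℝ (Fin d) × EuclideanSpace ℝ (Fin d) → ℝ),
      Measurable h → (∃ M, ∀ p, |h p| ≤ M) →
      Integrable (fun p : EuclideanSpace ℝ (Fin d) × EuclideanSpace ℝ (Fin d) =>
        h p * (gaussDensity d lam (p.1 - v) * gaussDensity d lam (p.2 - vs)))
        (volume.prod volume) := by
    rintro h hm ⟨M, hM⟩
    exact hGprod.bdd_mul hm.aestronglyMeasurable (c := M) (Filter.Eventually.of_forall fun p => by simpa using hM p)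
  have hI1 : Integrable (fun p : EuclideanSpace ℝ (Fin d) × EuclideanSpace ℝ (Fin d) =>
      (f (p.1 - ⟪p.1 - p.2, σ⟫ • σ) + f (p.2 + ⟪p.1 - p.2, σ⟫ • σ)) *
        (gaussDensity d lam (p.1 - v) * gaussDensity d lam (p.2 - vs))) (volume.prod volume) :=
    hbm _ hm1 ⟨C + C, fun p => (abs_add_le _ _).trans (add_le_add (hC _) (hC _))⟩
  have hI2 : Integrable (fun p : EuclideanSpace ℝ (Fin d) × EuclideanSpace ℝ (Fin d) =>
      (f p.1 + f p.2) * (gaussDensity d lam (p.1 - v) * gaussDensity d lam (p.2 - vs)))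
      (volume.prod volume) :=
    hbm _ hm2 ⟨C + C, fun p => (abs_add_le _ _).trans (add_le_add (hC _) (hC _))⟩
  have hI3 : Integrable (fun p : EuclideanSpace ℝ (Fin d) × EuclideanSpace ℝ (Fin d) =>
      (f (p.1 - ⟪p.1 - p.2, σ⟫ • σ) + f (p.2 + ⟪p.1 - p.2, σ⟫ • σ) - f p.1 - f p.2) *
        (gaussDensity d lam (p.1 - v) * gaussDensity d lam (p.2 - vs))) (volume.prod volume) := by
    refine hbm _ hm3 ⟨C + C + C + C, fun p => ?_⟩
    have h1 := abs_le.1 (hC (p.1 - ⟪p.1 - p.2, σ⟫ • σ))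
    have h2 := abs_le.1 (hC (p.2 + ⟪p.1 - p.2, σ⟫ • σ))
    have h3 := abs_le.1 (hC p.1)
    have h4 := abs_le.1 (hC p.2)
    rw [abs_le]
    constructor <;> linarith [h1.1, h1.2, h2.1, h2.2, h3.1, h3.2, h4.1, h4.2]
  have hMP' : MeasurePreserving (collMap d σ) (volume.prod volume) (volume.prod volume) := by
    rw [← Measure.volume_eq_prod]; exact hMP
  have hI2' : Integrable (fun p : EuclideanSpace ℝ (Fin d) × EuclideanSpace ℝ (Fin d) =>
      (f p.1 + f p.2) * (gaussDensity d lam (p.1 - (v - ⟪v - vs, σ⟫ • σ)) *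
        gaussDensity d lam (p.2 - (vs + ⟪v - vs, σ⟫ • σ)))) (volume.prod volume) :=
    ((hg1 _).mul_prod (hg1 _)).bdd_mul hm2.aestronglyMeasurable
      (c := C + C) (Filter.Eventually.of_forall fun (p : EuclideanSpace ℝ (Fin d) × EuclideanSpace ℝ (Fin d)) => by
        simpa using (abs_add_le (f p.1) (f p.2)).trans (add_le_add (hC _) (hC _)))
  -- iterated-integral ↔ product-integral identifications
  have itor1 : (∫ u, ∫ us, (f (u - ⟪u - us, σ⟫ • σ) + f (us + ⟪u - us, σ⟫ • σ)) *
        (gaussDensity d lam (u - v) * gaussDensity d lam (us - vs)))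
      = ∫ p : EuclideanSpace ℝ (Fin d) × EuclideanSpace ℝ (Fin d),
        (f (p.1 - ⟪p.1 - p.2, σ⟫ • σ) + f (p.2 + ⟪p.1 - p.2, σ⟫ • σ)) *
          (gaussDensity d lam (p.1 - v) * gaussDensity d lam (p.2 - vs)) ∂(volume.prod volume) :=
    MeasureTheory.integral_integral hI1
  have itor2 : (∫ u, ∫ us, (f u + f us) *
        (gaussDensity d lam (u - v) * gaussDensity d lam (us - vs)))
      = ∫ p : EuclideanSpace ℝ (Fin d) × EuclideanSpace ℝ (Fin d),
        (f p.1 + f p.2) *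
          (gaussDensity d lam (p.1 - v) * gaussDensity d lam (p.2 - vs)) ∂(volume.prod volume) :=
    MeasureTheory.integral_integral hI2
  have itor2' : (∫ u, ∫ us, (f u + f us) *
        (gaussDensity d lam (u - (v - ⟪v - vs, σ⟫ • σ)) *
          gaussDensity d lam (us - (vs + ⟪v - vs, σ⟫ • σ))))
      = ∫ p : EuclideanSpace ℝ (Fin d) × EuclideanSpace ℝ (Fin d),
        (f p.1 + f p.2) * (gaussDensity d lam (p.1 - (v - ⟪v - vs, σ⟫ • σ)) *
          gaussDensity d lam (p.2 - (vs + ⟪v - vs, σ⟫ • σ))) ∂(volume.prod volume) :=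
    MeasureTheory.integral_integral hI2'
  have itor3 : (∫ u, ∫ us, (f (u - ⟪u - us, σ⟫ • σ) + f (us + ⟪u - us, σ⟫ • σ) - f u - f us) *
        (gaussDensity d lam (u - v) * gaussDensity d lam (us - vs)))
      = ∫ p : EuclideanSpace ℝ (Fin d) × EuclideanSpace ℝ (Fin d),
        (f (p.1 - ⟪p.1 - p.2, σ⟫ • σ) + f (p.2 + ⟪p.1 - p.2, σ⟫ • σ) - f p.1 - f p.2) *
          (gaussDensity d lam (p.1 - v) * gaussDensity d lam (p.2 - vs)) ∂(volume.prod volume) :=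
    MeasureTheory.integral_integral hI3
  -- the change of variables on the product space
  have hcomp : (fun p : EuclideanSpace ℝ (Fin d) × EuclideanSpace ℝ (Fin d) =>
      (f (p.1 - ⟪p.1 - p.2, σ⟫ • σ) + f (p.2 + ⟪p.1 - p.2, σ⟫ • σ)) *
        (gaussDensity d lam (p.1 - v) * gaussDensity d lam (p.2 - vs)))
      = (fun p : EuclideanSpace ℝ (Fin d) × EuclideanSpace ℝ (Fin d) =>
          (fun q : EuclideanSpace ℝ (Fin d) × EuclideanSpace ℝ (Fin d) =>
            (f q.1 + f q.2) * (gaussDensity d lam (q.1 - (v - ⟪v - vs, σ⟫ • σ)) *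
              gaussDensity d lam (q.2 - (vs + ⟪v - vs, σ⟫ • σ)))) (collMap d σ p)) := by
    funext p
    have h2 : v - ⟪v - vs, σ⟫ • σ = (collMap d σ (v, vs)).1 := rfl
    have h3 : vs + ⟪v - vs, σ⟫ • σ = (collMap d σ (v, vs)).2 := rfl
    beta_reduce
    rw [h2, h3, gaussDensity_pair_coll lam σ hσ p v vs, collMap_fst, collMap_snd]
  have key1 : (∫ p : EuclideanSpace ℝ (Fin d) × EuclideanSpace ℝ (Fin d),
      (f (p.1 - ⟪p.1 - p.2, σ⟫ • σ) + f (p.2 + ⟪p.1 - p.2, σ⟫ • σ)) *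
        (gaussDensity d lam (p.1 - v) * gaussDensity d lam (p.2 - vs)) ∂(volume.prod volume))
      = gaussConv d lam f (v - ⟪v - vs, σ⟫ • σ) + gaussConv d lam f (vs + ⟪v - vs, σ⟫ • σ) := by
    rw [hcomp]
    exact (hMP'.integral_comp hemb _).trans
      (itor2'.symm.trans (double_int d lam hlam f hf_meas C hC _ _))
  have key2 : (∫ p : EuclideanSpace ℝ (Fin d) × EuclideanSpace ℝ (Fin d),
      (f p.1 + f p.2) *
        (gaussDensity d lam (p.1 - v) * gaussDensity d lam (p.2 - vs)) ∂(volume.prod volume))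
      = gaussConv d lam f v + gaussConv d lam f vs :=
    itor2.symm.trans (double_int d lam hlam f hf_meas C hC _ _)
  have key3 : (∫ p : EuclideanSpace ℝ (Fin d) × EuclideanSpace ℝ (Fin d),
      (f (p.1 - ⟪p.1 - p.2, σ⟫ • σ) + f (p.2 + ⟪p.1 - p.2, σ⟫ • σ) - f p.1 - f p.2) *
        (gaussDensity d lam (p.1 - v) * gaussDensity d lam (p.2 - vs)) ∂(volume.prod volume))
      = (∫ p : EuclideanSpace ℝ (Fin d) × EuclideanSpace ℝ (Fin d),
          (f (p.1 - ⟪p.1 - p.2, σ⟫ • σ) + f (p.2 + ⟪p.1 - p.2, σ⟫ • σ)) *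
            (gaussDensity d lam (p.1 - v) * gaussDensity d lam (p.2 - vs)) ∂(volume.prod volume))
        - ∫ p : EuclideanSpace ℝ (Fin d) × EuclideanSpace ℝ (Fin d),
          (f p.1 + f p.2) *
            (gaussDensity d lam (p.1 - v) * gaussDensity d lam (p.2 - vs)) ∂(volume.prod volume) := by
    have hpt : ∀ p : EuclideanSpace ℝ (Fin d) × EuclideanSpace ℝ (Fin d),
        (f (p.1 - ⟪p.1 - p.2, σ⟫ • σ) + f (p.2 + ⟪p.1 - p.2, σ⟫ • σ) - f p.1 - f p.2) *
          (gaussDensity d lam (p.1 - v) * gaussDensity d lam (p.2 - vs))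
        = (f (p.1 - ⟪p.1 - p.2, σ⟫ • σ) + f (p.2 + ⟪p.1 - p.2, σ⟫ • σ)) *
            (gaussDensity d lam (p.1 - v) * gaussDensity d lam (p.2 - vs))
          - (f p.1 + f p.2) *
            (gaussDensity d lam (p.1 - v) * gaussDensity d lam (p.2 - vs)) := fun p => by ring
    simp_rw [hpt]
    exact integral_sub hI1 hI2
  refine ⟨?_, ?_⟩
  · rw [itor1, key1]
  · rw [itor3, key3, key1, key2]
    ring
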